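/- Let F be a partially additive field such that (1) no dimensionful element has a power that is dimensionless (for all n ≥ 1, a dimensionful implies aⁿ dimensionful), and (2) for all n ≥ 1, if two non-zero dimensionful elements b, b' are summable and b has an n-th root in Q, then b' also has an n-th root in Q. Then the multiplicative group of non-zero dimensionless elements is divisible. -/
import Mathlib


/-- A partially additive field: partial addition (modeled via `Option`, `none` = undefined),
total multiplication, per-element zeros, etc. -/
structure PAF (Q : Type*) where
  add : Q → Q → Option Q
  mul : Q → Q → Q
  zero : Q → Q
  one : Q
  neg : Q → Q
  inv : Q → Q
  add_comm : ∀ a b, add a b = add b a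
  mul_comm : ∀ a b, mul a b = mul b a
  add_assoc : ∀ a b c, (add a b).bind (fun x => add x c) = (add b c).bind (fun x => add a x)
  mul_assoc : ∀ a b c, mul (mul a b) c = mul a (mul b c)
  left_distrib : ∀ a b c, (add b c).map (mul a) = add (mul a b) (mul a c)
  add_zero : ∀ a, add a (zero a) = some a
  zero_unique : ∀ a z, add a z = some a → z = zero a
  mul_one : ∀ a, mul a one = a
  add_neg : ∀ a, add a (neg a) = some (zero a)
  mul_inv : ∀ a, (¬ ∃ b, a = zero b) → mul a (inv a) = one
  nontrivial : ∀ a b, a = zero b → ∃ c, (¬ ∃ d, c = zero d) ∧ a = zero c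

namespace PAF
variable {Q : Type*} (F : PAF Q)

/-- `a` is a zero element. -/
def IsZero (a : Q) : Prop := ∃ b, a = F.zero b

/-- `a` and `b` are summable (their sum is defined). -/
def Summable (a b : Q) : Prop := (F.add a b).isSome

/-- `a` is dimensionless iff it is summable with `1`. -/
def Dimensionless (a : Q) : Prop := F.Summable a F.one

/-- `n`-th power via the total multiplication. -/
def pow (a : Q) : ℕ → Q
  | 0 => F.one
  | n + 1 => F.mul a (pow a n)

end PAF

namespace PAF
variable {Q : Type*} (F : PAF Q)

/-- Multiplying a zero gives a zero. -/
lemma mul_zero'' (x y : Q) : F.mul x (F.zero y) = F.zero (F.mul x y) := by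
  apply F.zero_unique
  have h := F.left_distrib x y (F.zero y)
  rw [F.add_zero, Option.map_some] at h
  exact h.symm

lemma summable_iff {a b : Q} : F.Summable a b ↔ ∃ s, F.add a b = some s := by
  unfold Summable
  exact Option.isSome_iff_exists

lemma one_not_zero : ¬ F.IsZero F.one := by
  rintro ⟨b, hb⟩
  obtain ⟨c, hc, h1⟩ := F.nontrivial _ _ hb
  apply hc
  refine ⟨F.mul c c, ?_⟩
  calc c = F.mul c F.one := (F.mul_one c).symm
    _ = F.mul c (F.zero c) := by rw [h1]
    _ = F.zero (F.mul c c) := F.mul_zero'' c c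

/-- Summable elements share the same zero. -/
lemma zero_eq_of_summable {x y : Q} (h : F.Summable x y) : F.zero x = F.zero y := by
  obtain ⟨s, hs⟩ := F.summable_iff.mp h
  have hy : F.zero y = F.zero s := by
    have h1 := F.add_assoc x y (F.zero y)
    rw [hs, F.add_zero, Option.bind_some, Option.bind_some, hs] at h1
    exact F.zero_unique s _ h1
  have hs' : F.add y x = some s := by rw [F.add_comm]; exact hs
  have hx : F.zero x = F.zero s := by
    have h1 := F.add_assoc y x (F.zero x)
    rw [hs', F.add_zero, Option.bind_some, Option.bind_some, hs'] at h1
    exact F.zero_unique s _ h1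
  rw [hx, hy]

/-- Cancellation for partial addition. -/
lemma add_cancel {a b c s : Q} (hb : F.add a b = some s) (hc : F.add a c = some s) : b = c := by
  have key : ∀ t : Q, F.add a t = some s → F.add s (F.neg a) = some t := by
    intro t ht
    have hsum : F.Summable a t := F.summable_iff.mpr ⟨s, ht⟩
    have hz : F.zero a = F.zero t := F.zero_eq_of_summable hsum
    have h1 := F.add_assoc t a (F.neg a)
    rw [F.add_neg, Option.bind_some] at h1
    have hta : F.add t a = some s := by rw [F.add_comm]; exact ht
    rw [hta, Option.bind_some, hz, F.add_zero] at h1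
    exact h1
  have k1 := key b hb
  have k2 := key c hc
  rw [k1] at k2
  exact Option.some.inj k2

/-- `-1` squares to `1`. -/
lemma neg_one_sq : F.mul (F.neg F.one) (F.neg F.one) = F.one := by
  set m := F.neg F.one with hm
  have h1 : F.add F.one m = some (F.zero F.one) := F.add_neg F.one
  have hzm : F.zero m = F.zero F.one :=
    (F.zero_eq_of_summable (F.summable_iff.mpr ⟨_, h1⟩)).symm
  have h2 := F.left_distrib m F.one m
  rw [h1, Option.map_some, F.mul_one, F.mul_zero'', F.mul_one] at h2
  -- h2 : some (F.zero m) = F.add m (F.mul m m)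
  have h3 : F.add m (F.mul m m) = some (F.zero F.one) := by rw [← h2, hzm]
  have h4 : F.add m F.one = some (F.zero F.one) := by rw [F.add_comm]; exact h1
  exact F.add_cancel h3 h4

/-- If `zero x = zero 1` then `x·(-1)` is dimensionless. -/
lemma dimensionless_mul_neg_one {x : Q} (h : F.zero x = F.zero F.one) :
    F.Dimensionless (F.mul x (F.neg F.one)) := by
  set m := F.neg F.one with hm
  have h1 : F.add F.one m = some (F.zero F.one) := F.add_neg F.one
  have hx : F.add x (F.mul x m) = some (F.zero F.one) := by
    have h2 := F.left_distrib x F.one m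
    rw [h1, Option.map_some, F.mul_one, F.mul_zero'', F.mul_one] at h2
    rw [← h2, h]
  have h3 := F.add_assoc x (F.mul x m) F.one
  rw [hx, Option.bind_some] at h3
  have h4 : F.add (F.zero F.one) F.one = some F.one := by
    rw [F.add_comm]; exact F.add_zero F.one
  rw [h4] at h3
  -- h3 : some F.one = (F.add (F.mul x m) F.one).bind _
  unfold Dimensionless Summable
  cases hcase : F.add (F.mul x m) F.one with
  | none => rw [hcase] at h3; simp at h3
  | some t => rfl

/-- If `zero x = zero 1` then `x` is dimensionless. -/
lemma dimensionless_of_zero_eq {x : Q} (h : F.zero x = F.zero F.one) :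
    F.Dimensionless x := by
  set m := F.neg F.one with hm
  have h1 : F.add F.one m = some (F.zero F.one) := F.add_neg F.one
  have hzm : F.zero m = F.zero F.one :=
    (F.zero_eq_of_summable (F.summable_iff.mpr ⟨_, h1⟩)).symm
  have hmz : F.mul m (F.zero F.one) = F.zero F.one := by
    rw [F.mul_zero'', F.mul_one, hzm]
  have hzxm : F.zero (F.mul x m) = F.zero F.one := by
    have : F.mul (F.mul x m) (F.zero F.one) = F.zero (F.mul x m) := by
      rw [F.mul_zero'', F.mul_one]
    rw [← this, F.mul_assoc, hmz]
    have : F.mul x (F.zero F.one) = F.zero x := by rw [F.mul_zero'', F.mul_one]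
    rw [this, h]
  have hd := F.dimensionless_mul_neg_one hzxm
  rw [F.mul_assoc, ← hm, F.neg_one_sq, F.mul_one] at hd
  exact hd

/-- Anything summable with a dimensionless element is dimensionless. -/
lemma dimensionless_of_summable {x v : Q} (hv : F.Dimensionless v)
    (h : F.Summable x v) : F.Dimensionless x := by
  apply F.dimensionless_of_zero_eq
  rw [F.zero_eq_of_summable h, F.zero_eq_of_summable hv]

/-- Dimensionless elements are closed under multiplication. -/
lemma dimensionless_mul {u w : Q} (hu : F.Dimensionless u) (hw : F.Dimensionless w) :
    F.Dimensionless (F.mul u w) := by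
  obtain ⟨t, ht⟩ := F.summable_iff.mp hw
  have h2 := F.left_distrib u w F.one
  rw [ht, Option.map_some, F.mul_one] at h2
  exact F.dimensionless_of_summable hu (F.summable_iff.mpr ⟨_, h2.symm⟩)

/-- The inverse of a nonzero dimensionless element is dimensionless. -/
lemma dimensionless_inv {a : Q} (ha : F.Dimensionless a) (hnz : ¬ F.IsZero a) :
    F.Dimensionless (F.inv a) := by
  obtain ⟨t, ht⟩ := F.summable_iff.mp ha
  have h2 := F.left_distrib (F.inv a) a F.one
  rw [ht, Option.map_some, F.mul_one, F.mul_comm (F.inv a) a, F.mul_inv a hnz] at h2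
  have : F.add (F.inv a) F.one = some (F.mul (F.inv a) t) := by
    rw [F.add_comm]; exact h2.symm
  exact F.summable_iff.mpr ⟨_, this⟩

lemma mul_not_zero {x y : Q} (hx : ¬ F.IsZero x) (hy : ¬ F.IsZero y) :
    ¬ F.IsZero (F.mul x y) := by
  rintro ⟨e, he⟩
  apply hy
  have : y = F.mul (F.inv x) (F.mul x y) := by
    rw [← F.mul_assoc, F.mul_comm (F.inv x) x, F.mul_inv x hx, F.mul_comm, F.mul_one]
  rw [this, he, F.mul_zero'']
  exact ⟨_, rfl⟩

lemma isZero_mul {x : Q} (y : Q) (hx : F.IsZero x) : F.IsZero (F.mul x y) := by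
  obtain ⟨e, he⟩ := hx
  rw [he, F.mul_comm, F.mul_zero'']
  exact ⟨_, rfl⟩

lemma mul4 (a b c d : Q) :
    F.mul (F.mul a b) (F.mul c d) = F.mul (F.mul a c) (F.mul b d) := by
  rw [F.mul_assoc, F.mul_assoc, ← F.mul_assoc b c d, F.mul_comm b c, F.mul_assoc c b d]

lemma pow_mul_pow (x y : Q) (n : ℕ) :
    F.mul (F.pow x n) (F.pow y n) = F.pow (F.mul x y) n := by
  induction n with
  | zero => exact F.mul_one F.one
  | succ k ih =>
    show F.mul (F.mul x (F.pow x k)) (F.mul y (F.pow y k))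
        = F.mul (F.mul x y) (F.pow (F.mul x y) k)
    rw [F.mul4, ih]

lemma pow_one' (n : ℕ) : F.pow F.one n = F.one := by
  induction n with
  | zero => rfl
  | succ k ih => show F.mul F.one (F.pow F.one k) = F.one; rw [ih, F.mul_one]

lemma pow_not_zero {x : Q} (hx : ¬ F.IsZero x) (n : ℕ) : ¬ F.IsZero (F.pow x n) := by
  induction n with
  | zero => exact F.one_not_zero
  | succ k ih => exact F.mul_not_zero hx ih

lemma pow_isZero {x : Q} (hx : F.IsZero x) {n : ℕ} (hn : 1 ≤ n) :
    F.IsZero (F.pow x n) := by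
  obtain ⟨k, rfl⟩ := Nat.exists_eq_add_of_le hn
  rw [Nat.add_comm]
  exact F.isZero_mul _ hx

/-- There is a nonzero dimensionful element. -/
lemma exists_nonzero_dimensionful (hdim : ∃ a : Q, ¬ F.Dimensionless a) :
    ∃ g : Q, ¬ F.Dimensionless g ∧ ¬ F.IsZero g := by
  obtain ⟨d, hd⟩ := hdim
  by_cases hz : F.IsZero d
  · obtain ⟨b, hb⟩ := hz
    obtain ⟨c, hc, hdc⟩ := F.nontrivial _ _ hb
    refine ⟨c, ?_, hc⟩
    intro hcd
    apply hd
    apply F.dimensionless_of_zero_eq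
    rw [hdc, ← F.zero_eq_of_summable hcd]
    have : F.add (F.zero c) c = some c := by rw [F.add_comm]; exact F.add_zero c
    exact F.zero_eq_of_summable (F.summable_iff.mpr ⟨_, this⟩)
  · exact ⟨d, hd, hz⟩

end PAF

/-- If dimensionful elements have dimensionful powers and summable non-zero dimensionful elements
have the same `n`-th roots, then the group of non-zero dimensionless elements is divisible. -/
theorem dimensionless_divisible {Q : Type*} (F : PAF Q)
    (h1 : ∀ n : ℕ, 1 ≤ n → ∀ a : Q, ¬ F.Dimensionless a → ¬ F.Dimensionless (F.pow a n))
    (h2 : ∀ n : ℕ, 1 ≤ n → ∀ b b' : Q, ¬ F.Dimensionless b → ¬ F.Dimensionless b' →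
      ¬ F.IsZero b → ¬ F.IsZero b' → F.Summable b b' →
      (∃ c : Q, F.pow c n = b) → ∃ c' : Q, F.pow c' n = b')
    (hdim : ∃ a : Q, ¬ F.Dimensionless a) :
    ∀ n : ℕ, 1 ≤ n → ∀ a : Q, F.Dimensionless a → ¬ F.IsZero a →
      ∃ c : Q, F.Dimensionless c ∧ ¬ F.IsZero c ∧ F.pow c n = a := by
  intro n hn a ha hnza
  obtain ⟨g, hgdim, hgnz⟩ := F.exists_nonzero_dimensionful hdim
  set b := F.pow g n with hb
  have hbdim : ¬ F.Dimensionless b := h1 n hn g hgdim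
  have hbnz : ¬ F.IsZero b := F.pow_not_zero hgnz n
  set e := F.mul b a with he
  have henz : ¬ F.IsZero e := F.mul_not_zero hbnz hnza
  have hsum : F.Summable b e := by
    obtain ⟨t, ht⟩ := F.summable_iff.mp ha
    have hoa : F.add F.one a = some t := by rw [F.add_comm]; exact ht
    have h2 := F.left_distrib b F.one a
    rw [hoa, Option.map_some, F.mul_one] at h2
    exact F.summable_iff.mpr ⟨_, h2.symm⟩
  have hedim : ¬ F.Dimensionless e := by
    intro hed
    apply hbdim
    have hbe : b = F.mul e (F.inv a) := by
      rw [he, F.mul_assoc, F.mul_inv a hnza, F.mul_one]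
    rw [hbe]
    exact F.dimensionless_mul hed (F.dimensionless_inv ha hnza)
  obtain ⟨c', hc'⟩ := h2 n hn b e hbdim hedim hbnz henz hsum ⟨g, rfl⟩
  set c := F.mul c' (F.inv g) with hc
  have hp : F.pow c n = a := by
    rw [hc, ← F.pow_mul_pow, hc', he, F.mul_comm b a, F.mul_assoc,
      F.pow_mul_pow, F.mul_inv g hgnz, F.pow_one', F.mul_one]
  refine ⟨c, ?_, ?_, hp⟩
  · by_contra hcd
    exact (h1 n hn c hcd) (hp ▸ ha)
  · intro hcz
    exact hnza (hp ▸ F.pow_isZero hcz hn)
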